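/- Define d_{n,k} = Σ_{i=2k}^{n} (n-i+1)·C(n-k+1, i-2k). Then for all positive integers n and k with n ≥ 2k+2, d_{n,k}² ≥ d_{n,k+1}·d_{n,k-1}. -/

import Mathlib

open Finset

/-- `d n k = Σ_{i=2k}^{n} (n-i+1)·C(n-k+1, i-2k)`. -/
def d (n k : ℕ) : ℕ :=
  ∑ i ∈ Finset.Icc (2 * k) n, (n - i + 1) * Nat.choose (n - k + 1) (i - 2 * k)

def f (N m : ℕ) : ℕ := ∑ j ∈ Finset.range (N+1), (N + 1 - j) * Nat.choose m j

lemma d_eq_f {n k : ℕ} (h : 2*k ≤ n) : d n k = f (n - 2*k) (n - k + 1) := by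
  unfold d f
  apply Finset.sum_nbij' (fun i => i - 2*k) (fun j => j + 2*k)
  · intro i hi; simp only [Finset.mem_Icc] at hi; simp only [Finset.mem_range]; omega
  · intro j hj; simp only [Finset.mem_range] at hj; simp only [Finset.mem_Icc]; omega
  · intro i hi; simp only [Finset.mem_Icc] at hi; omega
  · intro j hj; simp only [Finset.mem_range] at hj; omega
  · intro i hi; simp only [Finset.mem_Icc] at hi
    congr 1
    omega

lemma d_zero {n k : ℕ} (h : n < 2*k) : d n k = 0 := by
  unfold d
  rw [Finset.Icc_eq_empty (by omega)]
  rfl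

lemma f_succ_left (N m : ℕ) : f (N+1) m = f N m + ∑ j ∈ Finset.range (N+2), Nat.choose m j := by
  unfold f
  have h1 : ∀ j ∈ Finset.range (N+2), (N+1+1-j) * Nat.choose m j
      = (N+1-j) * Nat.choose m j + Nat.choose m j := by
    intro j hj; simp only [Finset.mem_range] at hj
    have : N + 1 + 1 - j = (N + 1 - j) + 1 := by omega
    rw [this, add_mul, one_mul]
  rw [Finset.sum_congr rfl h1, Finset.sum_add_distrib]
  congr 1
  rw [Finset.sum_range_succ]
  simp

lemma f_pascal (N m : ℕ) : f (N+1) (m+1) = f (N+1) m + f N m := by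
  unfold f
  rw [Finset.sum_range_succ' (fun j => (N+1+1-j) * Nat.choose (m+1) j)]
  rw [Finset.sum_range_succ' (fun j => (N+1+1-j) * Nat.choose m j)]
  simp only [Nat.choose_succ_succ, Nat.choose_zero_right, Nat.succ_sub_succ, mul_add,
    Finset.sum_add_distrib, Nat.sub_zero]
  ring

lemma f_zero (m : ℕ) : f 0 m = 1 := by simp [f]

lemma dRec (n k : ℕ) : d (n+2) (k+1) = d (n+1) (k+1) + d n k := by
  rcases lt_trichotomy n (2*k) with h | h | h
  · rw [d_zero (by omega), d_zero (by omega), d_zero (by omega)]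
  · have h1 : 2*(k+1) ≤ n + 2 := by omega
    have h3 : 2*k ≤ n := by omega
    rw [d_eq_f h1, d_eq_f h3, d_zero (by omega)]
    have e1 : n + 2 - 2*(k+1) = 0 := by omega
    have e3 : n - 2*k = 0 := by omega
    rw [e1, e3, f_zero, f_zero]
  · have h1 : 2*(k+1) ≤ n + 2 := by omega
    have h2 : 2*(k+1) ≤ n + 1 := by omega
    have h3 : 2*k ≤ n := by omega
    rw [d_eq_f h1, d_eq_f h2, d_eq_f h3]
    obtain ⟨N, hN⟩ : ∃ N, n - 2*k = N + 1 := ⟨n - 2*k - 1, by omega⟩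
    have e1 : n + 2 - 2*(k+1) = N + 1 := by omega
    have e2 : n + 2 - (k+1) + 1 = (n - k + 1) + 1 := by omega
    have e3 : n + 1 - 2*(k+1) = N := by omega
    have e4 : n + 1 - (k+1) + 1 = n - k + 1 := by omega
    rw [e1, e2, e3, e4, hN, f_pascal, Nat.add_comm]

lemma d_pos {n k : ℕ} (h : 2*k ≤ n) : 0 < d n k := by
  rw [d_eq_f h]
  unfold f
  have h0 : (0:ℕ) ∈ Finset.range (n - 2*k + 1) := by simp
  have := Finset.single_le_sum
    (f := fun j => (n - 2*k + 1 - j) * Nat.choose (n - k + 1) j)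
    (fun i _ => Nat.zero_le _) h0
  simp only [Nat.sub_zero, Nat.choose_zero_right, Nat.mul_one] at this
  omega

lemma d0 (n : ℕ) : d n 0 = (n+1) * 2^n := by
  have key : ∀ n, d n 0 = f n (n+1) := by
    intro n
    have := d_eq_f (n := n) (k := 0) (by omega)
    simpa using this
  induction n with
  | zero => simp [key, f]
  | succ n ih =>
    rw [key] at *
    have : f (n+1) (n+1+1) = f (n+1) (n+1) + f n (n+1) := f_pascal n (n+1)
    rw [this, f_succ_left, Nat.sum_range_choose, ih]
    ring

lemma d1 (n : ℕ) : d (n+2) 1 = n * 2^(n+1) + 1 := by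
  induction n with
  | zero => decide
  | succ n ih =>
    have : d (n+1+2) 1 = d (n+2) 1 + d (n+1) 0 := dRec (n+1) 0
    rw [this, ih, d0]
    ring

lemma d2 (n : ℕ) : d (n+5) 2 = n * 2^(n+3) + (n+6) := by
  induction n with
  | zero => decide
  | succ n ih =>
    have : d (n+4+2) 2 = d (n+5) 2 + d (n+4) 1 := dRec (n+4) 1
    rw [show n+1+5 = n+4+2 from rfl, this, ih, show n+4 = n+2+2 from rfl, d1]
    ring

lemma aux_pow (m : ℕ) : (m+6)^2 ≤ 72 * 2^m := by
  induction m with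
  | zero => norm_num
  | succ m ih =>
    have : (m+1+6)^2 ≤ 2 * (m+6)^2 := by nlinarith [sq_nonneg m, Nat.zero_le m]
    calc (m+1+6)^2 ≤ 2 * (m+6)^2 := this
      _ ≤ 2 * (72 * 2^m) := by omega
      _ = 72 * 2^(m+1) := by ring

lemma LC1 (n : ℕ) : d n 2 * d n 0 ≤ d n 1 ^ 2 := by
  match n with
  | 0 | 1 | 2 | 3 => rw [d_zero (k := 2) (by omega)]; simp
  | 4 => decide
  | (m+5) =>
    rw [d2, d0, show m+5 = m+3+2 from rfl, d1]
    have haux : (m+6)^2 ≤ 9 * 2^(m+3) := by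
      calc (m+6)^2 ≤ 72 * 2^m := aux_pow m
        _ = 9 * 2^(m+3) := by ring
    have h1 : 2^(m+3+2) = 4 * 2^(m+3) := by ring
    have h2 : 2^(m+3+1) = 2 * 2^(m+3) := by ring
    rw [h1, h2]
    set t := 2^(m+3) with ht
    have htp : 0 < t := Nat.pow_pos (n := m+3) (by norm_num)
    nlinarith [Nat.mul_le_mul_right t haux, htp, sq_nonneg t]

lemma X0 (n : ℕ) : d (n+1) 0 * d n 1 ≤ d n 0 * d (n+1) 1 := by
  match n with
  | 0 | 1 => rw [d_zero (k := 1) (by omega)]; simp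
  | (m+2) =>
    rw [d0, d0, d1, show m+2+1 = m+1+2 from rfl, d1]
    have hs : m + 1 < 2^(m+1) := Nat.lt_two_pow_self (n := m+1)
    have h1 : 2^(m+2+1) = 4 * 2^(m+1) := by ring
    have h2 : 2^(m+1+1) = 2 * 2^(m+1) := by ring
    rw [h1, h2]
    set s := 2^(m+1) with hsdef
    nlinarith [Nat.mul_le_mul_right s (show 2*(m+4) ≤ 12 * s + (m+3) by omega), sq_nonneg s]

lemma trip : ∀ r : ℕ,
    (∀ k, d r (k+2) * d r k ≤ d r (k+1)^2) ∧
    (∀ k, d (r+1) (k+2) * d r k ≤ d (r+1) (k+1) * d r (k+1)) ∧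
    (∀ k, d (r+1) k * d r (k+1) ≤ d r k * d (r+1) (k+1)) := by
  intro r
  induction r using Nat.strong_induction_on with
  | _ r IH =>
  have hLC : ∀ k, d r (k+2) * d r k ≤ d r (k+1)^2 := by
    intro k
    match k with
    | 0 => exact LC1 r
    | (k+1) =>
      by_cases hr : r < 2*(k+3)
      · rw [d_zero (by omega)]; simp
      · push_neg at hr
        obtain ⟨m, rfl⟩ : ∃ m, r = m + 2 := ⟨r - 2, by omega⟩
        have hm : 2*k + 4 ≤ m := by omega
        have h1 : d (m+1) (k+3) * d (m+1) (k+1) ≤ d (m+1) (k+2)^2 :=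
          (IH (m+1) (by omega)).1 (k+1)
        have h2 : d m (k+2) * d m k ≤ d m (k+1)^2 := (IH m (by omega)).1 k
        have h3 : d (m+1) (k+1) * d m (k+2) ≤ d m (k+1) * d (m+1) (k+2) :=
          (IH m (by omega)).2.2 (k+1)
        have hw : d (m+1) (k+3) * d m (k+1) ≤ d (m+1) (k+2) * d m (k+2) :=
          (IH m (by omega)).2.1 (k+1)
        have hb : 0 < d m (k+1) := d_pos (by omega)
        have hb' : 0 < d m (k+2) := d_pos (by omega)
        have h4 : d (m+1) (k+3) * d m k ≤ d (m+1) (k+2) * d m (k+1) := by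
          have key : (d (m+1) (k+3) * d m k) * (d m (k+2) * d m (k+1))
              ≤ (d (m+1) (k+2) * d m (k+1)) * (d m (k+2) * d m (k+1)) := by
            calc (d (m+1) (k+3) * d m k) * (d m (k+2) * d m (k+1))
                = (d (m+1) (k+3) * d m (k+1)) * (d m (k+2) * d m k) := by ring
              _ ≤ (d (m+1) (k+2) * d m (k+2)) * (d m (k+1)^2) := Nat.mul_le_mul hw h2
              _ = (d (m+1) (k+2) * d m (k+1)) * (d m (k+2) * d m (k+1)) := by ring
          exact Nat.le_of_mul_le_mul_right key (Nat.mul_pos hb' hb)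
        rw [dRec m (k+2), dRec m (k+1), dRec m k]
        nlinarith [h1, h2, h3, h4]
  refine ⟨hLC, ?_, ?_⟩
  · -- W
    intro k
    match r, hLC with
    | 0, _ => rw [d_zero (n := 1) (by omega)]; simp
    | (s+1), hLC =>
      rw [dRec s (k+1), dRec s k]
      have p1 : d (s+1) (k+2) * d (s+1) k ≤ d (s+1) (k+1)^2 := hLC k
      have p2 : d (s+1) k * d s (k+1) ≤ d s k * d (s+1) (k+1) := (IH s (by omega)).2.2 k
      nlinarith [p1, p2]
  · -- X
    intro k
    match k with
    | 0 => exact X0 r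
    | (k+1) =>
      match r with
      | 0 => rw [d_zero (n := 0) (k := k+2) (by omega)]; simp
      | (s+1) =>
        rw [dRec s k, dRec s (k+1)]
        have pw : d (s+1) (k+2) * d s k ≤ d (s+1) (k+1) * d s (k+1) := (IH s (by omega)).2.1 k
        nlinarith [pw]

/-- For positive integers `n, k` with `n ≥ 2k+2`, `d_{n,k}² ≥ d_{n,k+1}·d_{n,k-1}`. -/
theorem stmt14 (n k : ℕ) (hk : 1 ≤ k) (h : 2 * k + 2 ≤ n) :
    d n (k + 1) * d n (k - 1) ≤ d n k ^ 2 := by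
  obtain ⟨j, rfl⟩ : ∃ j, k = j + 1 := ⟨k - 1, by omega⟩
  simpa using (trip n).1 j
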